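/- arXiv:2601.00717 — 3 statements merged into one kernel-verified Lean document; each statement's English description precedes it below -/
import Mathlib

section
/- For any self-adjoint bounded operators S, T on a Hilbert space K and any h ∈ K, with g(T) = T(1+T²)⁻¹, one has ‖g(T)h − g(S)h‖ ≤ ‖(T−S)(1+S²)⁻¹h‖ + ‖(S−T)S(1+S²)⁻¹h‖. -/
open ContinuousLinearMap

local notation "⟪" x ", " y "⟫" => @inner ℂ _ _ x y

lemma aux_sq {K : Type*} [NormedAddCommGroup K] [InnerProductSpace ℂ K] [CompleteSpace K]
    (T : K →L[ℂ] K) (hT : IsSelfAdjoint T) (x : K) :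
    ‖(1 + T * T) x‖ ^ 2 = ‖x‖ ^ 2 + 2 * ‖T x‖ ^ 2 + ‖T (T x)‖ ^ 2 := by
  have h1 : (1 + T * T) x = x + T (T x) := rfl
  rw [h1, @norm_add_sq ℂ]
  have h2 : ⟪x, T (T x)⟫ = ⟪T x, T x⟫ := (hT.isSymmetric x (T x)).symm
  rw [h2, inner_self_eq_norm_sq]

lemma aux_norm_le {K : Type*} [NormedAddCommGroup K] [InnerProductSpace ℂ K] [CompleteSpace K]
    (T : K →L[ℂ] K) (hT : IsSelfAdjoint T) (x : K) :
    ‖x‖ ≤ ‖(1 + T * T) x‖ ∧ ‖T x‖ ≤ ‖(1 + T * T) x‖ := by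
  have key := aux_sq T hT x
  constructor <;>
    nlinarith [norm_nonneg x, norm_nonneg (T x), norm_nonneg (T (T x)),
      norm_nonneg ((1 + T * T) x), sq_nonneg (‖T x‖), sq_nonneg (‖T (T x)‖)]

/-- For self-adjoint bounded operators S, T on a Hilbert space K and h ∈ K, with
g(T) = T(1+T²)⁻¹, one has
‖g(T)h − g(S)h‖ ≤ ‖(T−S)(1+S²)⁻¹h‖ + ‖(S−T)S(1+S²)⁻¹h‖. -/
theorem stmt_1 {K : Type*} [NormedAddCommGroup K] [InnerProductSpace ℂ K] [CompleteSpace K]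
    (S T : K →L[ℂ] K) (hS : IsSelfAdjoint S) (hT : IsSelfAdjoint T)
    (hSu : IsUnit (1 + S * S)) (hTu : IsUnit (1 + T * T)) (h : K) :
    ‖(T * ↑hTu.unit⁻¹) h - (S * ↑hSu.unit⁻¹) h‖ ≤
      ‖((T - S) * ↑hSu.unit⁻¹) h‖ + ‖((S - T) * S * ↑hSu.unit⁻¹) h‖ := by
  set u : K →L[ℂ] K := ↑hSu.unit⁻¹ with hu
  set v : K →L[ℂ] K := ↑hTu.unit⁻¹ with hv
  have hvinv : v * (1 + T * T) = 1 := by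
    have h0 := hTu.unit.inv_mul
    rw [IsUnit.unit_spec] at h0
    exact h0
  have hvinv' : (1 + T * T) * v = 1 := by
    have h0 := hTu.unit.mul_inv
    rw [IsUnit.unit_spec] at h0
    exact h0
  have huinv : (1 + S * S) * u = 1 := by
    have h0 := hSu.unit.mul_inv
    rw [IsUnit.unit_spec] at h0
    exact h0
  -- T commutes with v
  have hcomm : Commute T v := by
    have hcTu : Commute T (↑hTu.unit : K →L[ℂ] K) := by
      rw [IsUnit.unit_spec]
      exact Commute.add_right (Commute.one_right T) (Commute.mul_right rfl rfl)
    exact hcTu.units_inv_right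
  -- key identity
  have key : T * v - S * u = v * ((T - S) + T * ((S - T) * S)) * u := by
    have expand : (T - S) + T * ((S - T) * S) = T * (1 + S * S) - (1 + T * T) * S := by
      noncomm_ring
    rw [expand]
    symm
    calc v * (T * (1 + S * S) - (1 + T * T) * S) * u
        = v * T * ((1 + S * S) * u) - (v * (1 + T * T)) * (S * u) := by noncomm_ring
      _ = v * T - S * u := by rw [huinv, hvinv, mul_one, one_mul]
      _ = T * v - S * u := by rw [← hcomm.eq]
  -- norm bounds for v
  have happ : ∀ y : K, (1 + T * T) (v y) = y := by
    intro y
    have := congrArg (fun A : K →L[ℂ] K => A y) hvinv'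
    simpa [mul_apply] using this
  have hv_le : ∀ y : K, ‖v y‖ ≤ ‖y‖ := by
    intro y
    have := (aux_norm_le T hT (v y)).1
    rwa [happ y] at this
  have hTv_le : ∀ y : K, ‖T (v y)‖ ≤ ‖y‖ := by
    intro y
    have := (aux_norm_le T hT (v y)).2
    rwa [happ y] at this
  -- apply
  have keyh : (T * v) h - (S * u) h = (v * ((T - S) + T * ((S - T) * S)) * u) h := by
    rw [← ContinuousLinearMap.sub_apply, key]
  rw [keyh]
  have expand2 : (v * ((T - S) + T * ((S - T) * S)) * u) h
      = v (((T - S) * u) h) + v (T ((((S - T) * S) * u) h)) := by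
    simp only [ContinuousLinearMap.mul_apply, ContinuousLinearMap.add_apply, map_add]
  rw [expand2]
  calc ‖v (((T - S) * u) h) + v (T ((((S - T) * S) * u) h))‖
      ≤ ‖v (((T - S) * u) h)‖ + ‖v (T ((((S - T) * S) * u) h))‖ := norm_add_le _ _
    _ ≤ ‖((T - S) * u) h‖ + ‖(((S - T) * S) * u) h‖ := by
        gcongr
        · exact hv_le _
        · have hc : v (T ((((S - T) * S) * u) h)) = T (v ((((S - T) * S) * u) h)) := by
            have := congrArg (fun A : K →L[ℂ] K => A ((((S - T) * S) * u) h)) hcomm.eq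
            simpa [mul_apply] using this.symm
          rw [hc]
          exact hTv_le _
    _ = ‖((T - S) * u) h‖ + ‖((S - T) * S * u) h‖ := by rw [mul_assoc]
end

section
/- Let H be a Hilbert space and A ⊆ B(H) a *-subalgebra. Then the self-adjoint part A_sa of A is dense in the self-adjoint part of the SOT-closure of A, with respect to the strong operator topology. -/
open Filter Topology

set_option maxHeartbeats 1000000
set_option synthInstance.maxHeartbeats 400000

/-- The SOT-closure of a set of operators: the preimage of the closure of its
image under the (injective) map to `H → H` with the topology of pointwise
convergence. -/
def sotClosure {H : Type*} [NormedAddCommGroup H] [InnerProductSpace ℂ H]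
    (s : Set (H →L[ℂ] H)) : Set (H →L[ℂ] H) :=
  (fun T : H →L[ℂ] H => (T : H → H)) ⁻¹'
    closure ((fun T : H →L[ℂ] H => (T : H → H)) '' s)

/-- Convergence of evaluations against all continuous real-linear functionals implies
convergence in the weak topology. -/
theorem SotAux.tendsto_toWeakSpace {α E : Type*} [NormedAddCommGroup E] [NormedSpace ℝ E]
    {l : Filter α} {f : α → E} {x : E}
    (h : ∀ φ : E →L[ℝ] ℝ, Tendsto (fun a => φ (f a)) l (𝓝 (φ x))) :
    Tendsto (fun a => toWeakSpace ℝ E (f a)) l (𝓝 (toWeakSpace ℝ E x)) := by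
  have hinj : Function.Injective ((topDualPairing ℝ E).flip) := by
    intro a b hab
    have h0 : ∀ φ : E →L[ℝ] ℝ, φ (a - b) = 0 := by
      intro φ
      have := LinearMap.congr_fun hab φ
      simp only [LinearMap.flip_apply, topDualPairing_apply] at this
      simp [map_sub, this]
    exact sub_eq_zero.mp (NormedSpace.eq_zero_of_forall_dual_eq_zero ℝ h0)
  refine (WeakBilin.tendsto_iff_forall_eval_tendsto (topDualPairing ℝ E).flip hinj).mpr ?_
  exact fun φ => h φ

section Aux

variable {H : Type*} [NormedAddCommGroup H] [InnerProductSpace ℂ H] [CompleteSpace H]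

local notation "⟪" x ", " y "⟫" => @inner ℂ _ _ x y

/-- Key pointwise convergence: symmetrizations converge weakly. -/
theorem SotAux.key {α : Type*} {l : Filter α} {g : α → (H →L[ℂ] H)} {T : H →L[ℂ] H}
    (hpt : ∀ v : H, Tendsto (fun a => g a v) l (𝓝 (T v))) (hsa : IsSelfAdjoint T) (y v : H) :
    Tendsto (fun a => Complex.re ⟪y, ((2⁻¹ : ℂ) • (g a + star (g a))) v⟫) l
      (𝓝 (Complex.re ⟪y, T v⟫)) := by
  have h1 : Tendsto (fun a => ⟪y, g a v⟫) l (𝓝 ⟪y, T v⟫) :=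
    tendsto_const_nhds.inner (hpt v)
  have h2 : Tendsto (fun a => ⟪g a y, v⟫) l (𝓝 ⟪T y, v⟫) :=
    (hpt y).inner tendsto_const_nhds
  have hTyv : ⟪T y, v⟫ = ⟪y, T v⟫ := by
    conv_lhs => rw [← hsa.adjoint_eq]
    exact ContinuousLinearMap.adjoint_inner_left T v y
  have hmain : Tendsto (fun a => Complex.re ((2⁻¹ : ℂ) * (⟪y, g a v⟫ + ⟪g a y, v⟫))) l
      (𝓝 (Complex.re ((2⁻¹ : ℂ) * (⟪y, T v⟫ + ⟪T y, v⟫)))) :=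
    (Complex.continuous_re.tendsto _).comp ((h1.add h2).const_mul _)
  have hform : ∀ b : H →L[ℂ] H, ⟪y, ((2⁻¹ : ℂ) • (b + star b)) v⟫
      = (2⁻¹ : ℂ) * (⟪y, b v⟫ + ⟪b y, v⟫) := by
    intro b
    simp [ContinuousLinearMap.star_eq_adjoint, inner_smul_right, inner_add_right,
      ContinuousLinearMap.adjoint_inner_right, mul_add]
  have hlim : (2⁻¹ : ℂ) * (⟪y, T v⟫ + ⟪T y, v⟫) = ⟪y, T v⟫ := by rw [hTyv]; ring
  rw [← hlim]
  exact hmain.congr fun a => (congrArg Complex.re (hform (g a))).symm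

/-- Real-linear functionals on `PiLp 2` are given by sums of real parts of inner products. -/
theorem SotAux.dual_repr {ι : Type*} [Fintype ι] (φ : (PiLp 2 fun _ : ι => H) →L[ℝ] ℝ) :
    ∃ y : PiLp 2 fun _ : ι => H, ∀ f : PiLp 2 fun _ : ι => H,
      φ f = ∑ i, Complex.re ⟪y i, f i⟫ := by
  set E := PiLp 2 fun _ : ι => H with hE
  haveI : CompleteSpace E := inferInstance
  obtain ⟨ψ, hψ⟩ : ∃ ψ : E →L[ℂ] ℂ, ∀ f, Complex.re (ψ f) = φ f :=
    ⟨φ.extendTo𝕜', fun f => φ.toLinearMap.extendTo𝕜'_apply_re (𝕜 := ℂ) f⟩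
  refine ⟨(InnerProductSpace.toDual ℂ E).symm ψ, fun f => ?_⟩
  have h1 : ⟪(InnerProductSpace.toDual ℂ E).symm ψ, f⟫ = ψ f :=
    InnerProductSpace.toDual_symm_apply
  have h2 : ⟪(InnerProductSpace.toDual ℂ E).symm ψ, f⟫
      = ∑ i, ⟪(InnerProductSpace.toDual ℂ E).symm ψ i, f i⟫ := PiLp.inner_apply _ _
  rw [← hψ f, ← h1, h2, Complex.re_sum]

/-- Real scalar multiples of self-adjoint members stay in the self-adjoint part. -/
theorem SotAux.convex_sa (A : StarSubalgebra ℂ (H →L[ℂ] H)) :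
    Convex ℝ {a : H →L[ℂ] H | a ∈ A ∧ IsSelfAdjoint a} := by
  intro a ha b hb p q hp hq hpq
  constructor
  · rw [← algebraMap_smul ℂ p a, ← algebraMap_smul ℂ q b]
    exact add_mem (A.smul_mem ha.1 _) (A.smul_mem hb.1 _)
  · refine IsSelfAdjoint.add ?_ ?_
    · rw [← algebraMap_smul ℂ p a, IsSelfAdjoint, star_smul, ha.2.star_eq]
      congr 1; simp [Complex.star_def, Complex.conj_ofReal]
    · rw [← algebraMap_smul ℂ q b, IsSelfAdjoint, star_smul, hb.2.star_eq]
      congr 1; simp [Complex.star_def, Complex.conj_ofReal]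

end Aux

/-- For a *-subalgebra A ⊆ B(H), the self-adjoint part of A is SOT-dense in the
self-adjoint part of the SOT-closure of A. -/
theorem stmt_13 {H : Type*} [NormedAddCommGroup H] [InnerProductSpace ℂ H]
    [CompleteSpace H] (A : StarSubalgebra ℂ (H →L[ℂ] H)) :
    ∀ T : H →L[ℂ] H, T ∈ sotClosure (A : Set (H →L[ℂ] H)) → IsSelfAdjoint T →
      T ∈ sotClosure {a : H →L[ℂ] H | a ∈ A ∧ IsSelfAdjoint a} := by
  intro T hT hsa
  set S : Set (H →L[ℂ] H) := {a : H →L[ℂ] H | a ∈ A ∧ IsSelfAdjoint a} with hSdef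
  -- the filter of approximants
  set L : Filter (H →L[ℂ] H) :=
    comap (fun a : H →L[ℂ] H => (a : H → H)) (𝓝 (T : H → H)) ⊓ 𝓟 (A : Set (H →L[ℂ] H)) with hLdef
  have hTc : (T : H → H) ∈ closure ((fun a : H →L[ℂ] H => (a : H → H)) '' (A : Set (H →L[ℂ] H))) := hT
  have hLne : L.NeBot := by
    rw [hLdef, inf_principal_neBot_iff]
    intro U hU
    obtain ⟨V, hV, hVU⟩ := mem_comap.mp hU
    obtain ⟨g, hgV, a, haA, rfl⟩ := mem_closure_iff_nhds.mp hTc V hV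
    exact ⟨a, hVU hgV, haA⟩
  have hcoe : Tendsto (fun a : H →L[ℂ] H => (a : H → H)) L (𝓝 (T : H → H)) :=
    tendsto_iff_comap.mpr inf_le_left
  have hpt : ∀ v : H, Tendsto (fun a : H →L[ℂ] H => a v) L (𝓝 (T v)) :=
    fun v => (tendsto_pi_nhds.mp hcoe) v
  have hmemA : ∀ᶠ a in L, a ∈ A :=
    Eventually.filter_mono inf_le_right (eventually_principal.mpr fun _ h => h)
  -- symmetrization
  have hσS : ∀ a ∈ A, (2⁻¹ : ℂ) • (a + star a) ∈ S := by
    intro a ha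
    refine ⟨A.smul_mem (add_mem ha (star_mem ha)) _, ?_⟩
    rw [IsSelfAdjoint, star_smul, star_add, star_star, add_comm]
    congr 1
    simp [Complex.star_def]
  -- the goal, reduced to finite sets of vectors
  show (T : H → H) ∈ closure ((fun a : H →L[ℂ] H => (a : H → H)) '' S)
  rw [mem_closure_iff_nhds]
  intro V hV
  rw [nhds_pi] at hV
  obtain ⟨I, hIfin, W, hW, hIW⟩ := Filter.mem_pi.mp hV
  haveI : Fintype I := hIfin.fintype
  set E := PiLp 2 fun _ : I => H with hE
  haveI : CompleteSpace E := inferInstance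
  let Φ : (H →L[ℂ] H) →ₗ[ℝ] E :=
    { toFun := fun a => (WithLp.equiv 2 (∀ _ : I, H)).symm fun i => a (i : H)
      map_add' := fun a b => rfl
      map_smul' := fun r a => rfl }
  set C : Set E := Φ '' S with hCdef
  have hC : Convex ℝ C := (SotAux.convex_sa A).is_linear_image Φ.isLinear
  set p : E := (WithLp.equiv 2 (∀ _ : I, H)).symm fun i : I => T (i : H) with hp
  -- p is in the weak closure of C
  have hweak : toWeakSpace ℝ E p ∈ closure (toWeakSpace ℝ E '' C) := by
    refine mem_closure_of_tendsto (b := L)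
      (f := fun a : H →L[ℂ] H => toWeakSpace ℝ E (Φ ((2⁻¹ : ℂ) • (a + star a))))
      (SotAux.tendsto_toWeakSpace ?_) ?_
    · intro φ
      obtain ⟨y, hy⟩ := SotAux.dual_repr φ
      have hφp : φ p = ∑ i : I, Complex.re (inner ℂ (y i) (T (i : H))) := hy p
      have hφa : ∀ a : H →L[ℂ] H, φ (Φ ((2⁻¹ : ℂ) • (a + star a)))
          = ∑ i : I, Complex.re (inner ℂ (y i) (((2⁻¹ : ℂ) • (a + star a)) (i : H))) :=
        fun a => hy _
      rw [hφp]
      refine Tendsto.congr (fun a => (hφa a).symm) ?_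
      exact tendsto_finset_sum _ fun i _ => SotAux.key hpt hsa (y i) (i : H)
    · filter_upwards [hmemA] with a ha
      exact ⟨Φ ((2⁻¹ : ℂ) • (a + star a)), ⟨_, hσS a ha, rfl⟩, rfl⟩
  -- hence in the norm closure of C
  have hclos : p ∈ closure C := by
    rw [← hC.toWeakSpace_closure ℝ] at hweak
    obtain ⟨q, hq, hqe⟩ := hweak
    rwa [← (toWeakSpace ℝ E).injective hqe]
  -- transfer to the product topology and extract an approximant
  have hclos' : (WithLp.equiv 2 (∀ _ : I, H) p) ∈
      closure ((WithLp.equiv 2 (∀ _ : I, H)) '' C) :=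
    image_closure_subset_closure_image (PiLp.continuous_ofLp (p := 2) (β := fun _ : I => H)) ⟨p, hclos, rfl⟩
  have hU : (Set.univ.pi fun i : I => W (i : H)) ∈ 𝓝 (WithLp.equiv 2 (∀ _ : I, H) p) := by
    refine set_pi_mem_nhds Set.finite_univ fun i _ => ?_
    exact hW (i : H)
  obtain ⟨c, hcU, b, hbC, hcb⟩ := mem_closure_iff_nhds.mp hclos' _ hU
  obtain ⟨a, haS, rfl⟩ := hbC
  refine ⟨(a : H → H), hIW ?_, Set.mem_image_of_mem _ haS⟩
  intro v hv
  have := hcU ⟨v, hv⟩ (Set.mem_univ _)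
  rw [← hcb] at this
  exact this
end

section
/- Let A be a topological algebra with hypocontinuous multiplication whose continuous multiplicative linear functionals separate points of the bidual A''. If u ∈ A'' is a weak-* cluster point of the canonical images of idempotents of A, then u □ u = u, where □ is the first Arens product. -/
/-- Let A be a topological algebra whose continuous multiplicative linear
functionals separate points of the bidual A''. If u ∈ A'' is a weak-* limit of
canonical images of idempotents of A, then u □ u = u for the first Arens product
□, given here by its defining equations. -/
theorem stmt_16 {A : Type*} [Ring A] [Algebra ℂ A] [TopologicalSpace A]
    [IsTopologicalRing A]
    -- f_x ∈ A' : f_x(b) = f(xb)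
    (fRight : (A →L[ℂ] ℂ) → A → (A →L[ℂ] ℂ))
    (hfRight : ∀ f x b, fRight f x b = f (x * b))
    -- ᵥf ∈ A' : ᵥf(x) = v(f_x)
    (vf : (((A →L[ℂ] ℂ) →L[ℂ] ℂ)) → (A →L[ℂ] ℂ) → (A →L[ℂ] ℂ))
    (hvf : ∀ v f x, vf v f x = v (fRight f x))
    -- the first Arens product: (u □ v)(f) = u(ᵥf)
    (arens : ((A →L[ℂ] ℂ) →L[ℂ] ℂ) → ((A →L[ℂ] ℂ) →L[ℂ] ℂ) → ((A →L[ℂ] ℂ) →L[ℂ] ℂ))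
    (harens : ∀ u v f, arens u v f = u (vf v f))
    -- the multiplicative functionals separate points of A''
    (hsep : ∀ u v : (A →L[ℂ] ℂ) →L[ℂ] ℂ, u ≠ v →
      ∃ f : A →L[ℂ] ℂ, (∀ x y : A, f (x * y) = f x * f y) ∧ u f ≠ v f)
    -- u is a weak-* limit of canonical images of idempotents of A
    (u : (A →L[ℂ] ℂ) →L[ℂ] ℂ)
    {ι : Type*} (l : Filter ι) [l.NeBot] (a : ι → A)
    (hidem : ∀ i, a i * a i = a i)
    (hconv : ∀ f : A →L[ℂ] ℂ, Filter.Tendsto (fun i => f (a i)) l (nhds (u f))) :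
    arens u u = u := by
  by_contra h
  obtain ⟨f, hf, hne⟩ := hsep (arens u u) u h
  apply hne
  -- fRight f x = f x • f
  have h1 : ∀ x : A, fRight f x = f x • f := by
    intro x
    ext b
    simp [hfRight, hf]
  -- vf u f = u f • f
  have h2 : vf u f = u f • f := by
    ext x
    simp [hvf, h1, mul_comm]
  have h3 : arens u u f = u f * u f := by
    rw [harens, h2]
    simp [mul_comm]
  -- u f is idempotent
  have h4 : u f * u f = u f := by
    have t1 : Filter.Tendsto (fun i => f (a i) * f (a i)) l (nhds (u f * u f)) :=
      (hconv f).mul (hconv f)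
    have t2 : Filter.Tendsto (fun i => f (a i) * f (a i)) l (nhds (u f)) := by
      have : (fun i => f (a i) * f (a i)) = fun i => f (a i) := by
        funext i; rw [← hf, hidem]
      rw [this]; exact hconv f
    exact tendsto_nhds_unique t1 t2
  rw [h3, h4]
end
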